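/- (Corollary of the decomposition and monotonicity results.) For each t ∈ {0,1,…,T}, the joint value function V_t(x,k) is non-decreasing in x in the componentwise order — for x, x' ∈ ℕ^N with x_i ≤ x'_i for all i, V_t(x,k) ≤ V_t(x',k) — and non-decreasing in k: for k ≤ k', V_t(x,k) ≤ V_t(x,k'). -/

import Mathlib

open Filter

/-- Negative Binomial pmf with real shape `r` and success probability `p`:
`NB(r,p)(z) = Γ(z+r)/(Γ(r)·z!)·p^r·(1−p)^z` for `r > 0`, and `NB(0,p)` is
the point mass at `0`. -/
noncomputable def NB (r p : ℝ) (z : ℕ) : ℝ :=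
  if r = 0 then (if z = 0 then (1 : ℝ) else 0)
  else Real.Gamma ((z : ℝ) + r) / (Real.Gamma r * (Nat.factorial z : ℝ)) * p ^ r * (1 - p) ^ z

/-- `p_t = (β0 + N·t)/(β0 + N·t + 1)`. -/
noncomputable def pt (β0 : ℝ) (N t : ℕ) : ℝ :=
  (β0 + (N : ℝ) * (t : ℝ)) / (β0 + (N : ℝ) * (t : ℝ) + 1)

/-- Expectation `E_{(Z,K)}[f(Z,K)]` with `Z ~ NB(α0+k, p_t)` and
`K ~ NB((N−1)(α0+k), p_t)` independent. -/
noncomputable def EZK (α0 β0 : ℝ) (N t k : ℕ) (f : ℕ → ℕ → ℝ) : ℝ :=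
  ∑' z : ℕ, ∑' κ : ℕ,
    NB (α0 + (k : ℝ)) (pt β0 N t) z * NB (((N : ℝ) - 1) * (α0 + (k : ℝ))) (pt β0 N t) κ * f z κ

noncomputable def poch (r : ℝ) (n : ℕ) : ℝ := ∏ j ∈ Finset.range n, (r + j)

lemma poch_zero (r : ℝ) : poch r 0 = 1 := by simp [poch]

lemma poch_succ (r : ℝ) (n : ℕ) : poch r (n+1) = poch r n * (r + n) := by
  simp [poch, Finset.prod_range_succ]

lemma Gamma_poch {r : ℝ} (hr : 0 < r) (n : ℕ) :
    Real.Gamma ((n : ℝ) + r) = poch r n * Real.Gamma r := by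
  induction n with
  | zero => simp [poch_zero]
  | succ n ih =>
      have h : ((n:ℝ) + 1 + r) = ((n:ℝ) + r) + 1 := by ring
      have hne : (n:ℝ) + r ≠ 0 := by positivity
      rw [Nat.cast_succ, h, Real.Gamma_add_one hne, ih, poch_succ]
      ring

lemma NB_eq_poch {r : ℝ} (hr : 0 < r) (p : ℝ) (z : ℕ) :
    NB r p z = poch r z / (Nat.factorial z : ℝ) * (p ^ r * (1 - p) ^ z) := by
  have hΓ : Real.Gamma r ≠ 0 := (Real.Gamma_pos_of_pos hr).ne'
  have hf : (Nat.factorial z : ℝ) ≠ 0 := by positivity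
  rw [NB, if_neg hr.ne', Gamma_poch hr]
  field_simp

lemma NB_nonneg {r p : ℝ} (hr : 0 ≤ r) (hp : 0 < p) (hp1 : p < 1) (z : ℕ) :
    0 ≤ NB r p z := by
  rcases eq_or_lt_of_le hr with h | h
  · rw [NB, if_pos h.symm]; split_ifs <;> norm_num
  · rw [NB, if_neg h.ne']
    have h1 : 0 < Real.Gamma ((z:ℝ) + r) := Real.Gamma_pos_of_pos (by positivity)
    have h2 : 0 < Real.Gamma r := Real.Gamma_pos_of_pos h
    have h3 : (0:ℝ) < 1 - p := by linarith
    positivity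

lemma vandermonde (r s : ℝ) : ∀ m : ℕ,
    ∑ ab ∈ Finset.HasAntidiagonal.antidiagonal m,
      (poch r ab.1 / (ab.1.factorial : ℝ) * (poch s ab.2 / (ab.2.factorial : ℝ)))
      = poch (r + s) m / (m.factorial : ℝ) := by
  intro m
  induction m with
  | zero => simp [poch_zero]
  | succ m ih =>
      set g : ℕ × ℕ → ℝ :=
        fun ab => poch r ab.1 / (ab.1.factorial : ℝ) * (poch s ab.2 / (ab.2.factorial : ℝ)) with hg
      have key1 : ∑ ab ∈ Finset.HasAntidiagonal.antidiagonal (m+1), ((ab.1 : ℝ)) * g ab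
          = ∑ ab ∈ Finset.HasAntidiagonal.antidiagonal m, (r + ab.1) * g ab := by
        rw [Finset.Nat.sum_antidiagonal_succ
          (f := fun ab => ((ab.1 : ℝ)) * g ab)]
        simp only [Nat.cast_zero, zero_mul, zero_add]
        refine Finset.sum_congr rfl (fun ab _ => ?_)
        have hfa : (ab.1.factorial : ℝ) ≠ 0 := by positivity
        simp only [hg, poch_succ, Nat.factorial_succ, Nat.cast_succ, Nat.cast_mul]
        push_cast
        field_simp
      have key2 : ∑ ab ∈ Finset.HasAntidiagonal.antidiagonal (m+1), ((ab.2 : ℝ)) * g ab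
          = ∑ ab ∈ Finset.HasAntidiagonal.antidiagonal m, (s + ab.2) * g ab := by
        rw [Finset.Nat.sum_antidiagonal_succ'
          (f := fun ab => ((ab.2 : ℝ)) * g ab)]
        simp only [Nat.cast_zero, zero_mul, zero_add]
        refine Finset.sum_congr rfl (fun ab _ => ?_)
        have hfa : (ab.2.factorial : ℝ) ≠ 0 := by positivity
        simp only [hg, poch_succ, Nat.factorial_succ, Nat.cast_succ, Nat.cast_mul]
        push_cast
        field_simp
      have hmul : ((m:ℝ) + 1) * ∑ ab ∈ Finset.HasAntidiagonal.antidiagonal (m+1), g ab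
          = (r + s + m) * (poch (r+s) m / (m.factorial : ℝ)) := by
        rw [Finset.mul_sum]
        have h1 : ∀ ab ∈ Finset.HasAntidiagonal.antidiagonal (m+1),
            ((m:ℝ) + 1) * g ab = ((ab.1 : ℝ)) * g ab + ((ab.2 : ℝ)) * g ab := by
          intro ab hab
          rw [Finset.HasAntidiagonal.mem_antidiagonal] at hab
          have : ((ab.1 : ℝ)) + ((ab.2 : ℝ)) = (m:ℝ) + 1 := by exact_mod_cast congrArg Nat.cast hab
          linear_combination (-(g ab)) * this
        rw [Finset.sum_congr rfl h1, Finset.sum_add_distrib, key1, key2, ← Finset.sum_add_distrib,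
          ← ih, Finset.mul_sum]
        refine Finset.sum_congr rfl (fun ab hab => ?_)
        rw [Finset.HasAntidiagonal.mem_antidiagonal] at hab
        have : ((ab.1 : ℝ)) + ((ab.2 : ℝ)) = (m:ℝ) := by exact_mod_cast congrArg Nat.cast hab
        have hgab : g ab = poch r ab.1 / (ab.1.factorial : ℝ) * (poch s ab.2 / (ab.2.factorial : ℝ)) := rfl
        rw [← hgab]
        linear_combination (g ab) * this
      have hm1 : ((m:ℝ) + 1) ≠ 0 := by positivity
      have hf : ((m+1).factorial : ℝ) = ((m:ℝ)+1) * (m.factorial : ℝ) := by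
        rw [Nat.factorial_succ]; push_cast; ring
      rw [poch_succ, hf]
      have := hmul
      field_simp at this ⊢
      nlinarith [this]

lemma NB_conv {r s p : ℝ} (hr : 0 < r) (hs : 0 < s) (hp : 0 < p) (m : ℕ) :
    ∑ j ∈ Finset.range (m+1), NB r p j * NB s p (m - j) = NB (r+s) p m := by
  have key : ∑ ab ∈ Finset.HasAntidiagonal.antidiagonal m, NB r p ab.1 * NB s p ab.2 = NB (r+s) p m := by
    have h1 : ∀ ab ∈ Finset.HasAntidiagonal.antidiagonal m, NB r p ab.1 * NB s p ab.2
        = (poch r ab.1 / (ab.1.factorial : ℝ) * (poch s ab.2 / (ab.2.factorial : ℝ)))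
          * (p ^ (r+s) * (1-p) ^ m) := by
      intro ab hab
      rw [Finset.HasAntidiagonal.mem_antidiagonal] at hab
      rw [NB_eq_poch hr, NB_eq_poch hs, Real.rpow_add hp, ← hab, pow_add]
      ring
    rw [Finset.sum_congr rfl h1, ← Finset.sum_mul, vandermonde, NB_eq_poch (by positivity)]
  rw [← key, Finset.Nat.sum_antidiagonal_eq_sum_range_succ (f := fun a b => NB r p a * NB s p b)]

open MeasureTheory in
lemma integrableOn_aux {a b : ℝ} (ha : 0 < a) (hb : 0 < b) :
    IntegrableOn (fun t : ℝ => t ^ (a - 1) * Real.exp (-(b * t))) (Set.Ioi 0) := by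
  have h := integrableOn_rpow_mul_exp_neg_mul_rpow (p := 1) (s := a - 1) (b := b)
    (by linarith) zero_lt_one hb
  refine h.congr_fun (fun t ht => ?_) measurableSet_Ioi
  beta_reduce
  rw [Real.rpow_one, neg_mul]

open MeasureTheory in
lemma lint_aux {a b : ℝ} (ha : 0 < a) (hb : 0 < b) {C : ℝ} (hC : 0 ≤ C) :
    ENNReal.ofReal (C * ((1/b) ^ a * Real.Gamma a)) =
      ∫⁻ t in Set.Ioi 0, ENNReal.ofReal (C * (t ^ (a - 1) * Real.exp (-(b * t)))) := by
  rw [← Real.integral_rpow_mul_exp_neg_mul_Ioi ha hb, ← integral_const_mul]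
  refine MeasureTheory.ofReal_integral_eq_lintegral_ofReal ?_ ?_
  · exact ((integrableOn_aux ha hb).const_mul C)
  · refine (ae_restrict_iff' measurableSet_Ioi).mpr (ae_of_all _ (fun t ht => ?_))
    have ht0 : (0:ℝ) < t := ht
    positivity

open MeasureTheory in
lemma NB_mass {r p : ℝ} (hr : 0 < r) (hp : 0 < p) (hp1 : p < 1) :
    ∑' z : ℕ, ENNReal.ofReal (NB r p z) = 1 := by
  have h1p : (0:ℝ) < 1 - p := by linarith
  set b : ℝ := (1-p)⁻¹ with hbdef
  have hb : 0 < b := by positivity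
  have hbm : b * (1-p) = 1 := inv_mul_cancel₀ h1p.ne'
  have hb1 : 1 < b := by nlinarith
  set c : ℝ := b - 1 with hcdef
  have hc : 0 < c := by simp only [hcdef]; linarith
  have hcp : c = p / (1-p) := by
    rw [hcdef, hbdef]; field_simp; ring
  have hΓr : 0 < Real.Gamma r := Real.Gamma_pos_of_pos hr
  set K : ℝ := p ^ r * (1 - p) ^ (-r) / Real.Gamma r with hKdef
  have hK : 0 ≤ K := by positivity
  have h1b : (1:ℝ)/b = 1 - p := by rw [hbdef, one_div, inv_inv]
  -- pointwise identity: NB as a Gamma integral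
  have hNB : ∀ z : ℕ, NB r p z =
      (K / z.factorial) * ((1/b) ^ ((z:ℝ) + r) * Real.Gamma ((z:ℝ) + r)) := by
    intro z
    have hzr : (0:ℝ) < (z:ℝ) + r := by positivity
    rw [h1b, NB, if_neg hr.ne', hKdef]
    have hpow : (1-p) ^ ((z:ℝ) + r) = (1-p) ^ r * (1-p) ^ (z:ℕ) := by
      rw [← Real.rpow_natCast (1-p) z, ← Real.rpow_add h1p]; ring_nf
    have hnegr : (1-p) ^ (-r) * (1-p) ^ r = 1 := by
      rw [← Real.rpow_add h1p]; simp
    have hfz : (z.factorial : ℝ) ≠ 0 := by positivity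
    field_simp
    rw [hpow]
    linear_combination (-((1 - p) ^ z)) * hnegr
  have hmeas : ∀ z : ℕ, Measurable (fun t : ℝ =>
      ENNReal.ofReal ((K / z.factorial) * (t ^ (((z:ℝ)+r) - 1) * Real.exp (-(b * t))))) := by
    intro z
    apply Measurable.ennreal_ofReal
    exact (((measurable_id.pow measurable_const).mul
      ((measurable_id.const_mul b).neg.exp)).const_mul _)
  calc ∑' z : ℕ, ENNReal.ofReal (NB r p z)
      = ∑' z : ℕ, ∫⁻ t in Set.Ioi 0,
          ENNReal.ofReal ((K / z.factorial) * (t ^ (((z:ℝ)+r) - 1) * Real.exp (-(b * t)))) := by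
        refine tsum_congr fun z => ?_
        rw [hNB z]
        exact lint_aux (by positivity) hb (by positivity)
    _ = ∫⁻ t in Set.Ioi 0, ∑' z : ℕ,
          ENNReal.ofReal ((K / z.factorial) * (t ^ (((z:ℝ)+r) - 1) * Real.exp (-(b * t)))) :=
        (lintegral_tsum fun z => (hmeas z).aemeasurable).symm
    _ = ∫⁻ t in Set.Ioi 0, ENNReal.ofReal (K * (t ^ (r-1) * Real.exp (-(c * t)))) := by
        refine setLIntegral_congr_fun measurableSet_Ioi (fun t ht => ?_)
        have ht0 : (0:ℝ) < t := ht
        set C : ℝ := K * (t ^ (r-1) * Real.exp (-(b * t))) with hCdef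
        have hC : 0 ≤ C := by positivity
        have hsplit : ∀ z : ℕ, (K / z.factorial) * (t ^ (((z:ℝ)+r) - 1) * Real.exp (-(b * t)))
            = C * (t ^ z / (z.factorial : ℝ)) := by
          intro z
          have hre : ((z:ℝ) + r) - 1 = (r - 1) + (z:ℝ) := by ring
          rw [hre, Real.rpow_add ht0, Real.rpow_natCast, hCdef]
          ring
        have hexp : HasSum (fun z : ℕ => t ^ z / (z.factorial : ℝ)) (Real.exp t) := by
          rw [Real.exp_eq_exp_ℝ]; exact NormedSpace.expSeries_div_hasSum_exp t
        have hsum : HasSum (fun z : ℕ => C * (t ^ z / (z.factorial : ℝ))) (C * Real.exp t) :=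
          hexp.mul_left C
        calc ∑' z : ℕ,
            ENNReal.ofReal ((K / z.factorial) * (t ^ (((z:ℝ)+r) - 1) * Real.exp (-(b * t))))
            = ∑' z : ℕ, ENNReal.ofReal (C * (t ^ z / (z.factorial : ℝ))) :=
              tsum_congr fun z => by rw [hsplit z]
          _ = ENNReal.ofReal (∑' z : ℕ, C * (t ^ z / (z.factorial : ℝ))) :=
              (ENNReal.ofReal_tsum_of_nonneg (fun z => by positivity) hsum.summable).symm
          _ = ENNReal.ofReal (C * Real.exp t) := by rw [hsum.tsum_eq]
          _ = ENNReal.ofReal (K * (t ^ (r-1) * Real.exp (-(c * t)))) := by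
              congr 1
              have hee : Real.exp (-(b*t)) * Real.exp t = Real.exp (-(c*t)) := by
                rw [← Real.exp_add]; congr 1; simp only [hcdef]; ring
              rw [hCdef]
              linear_combination (K * t ^ (r-1)) * hee
    _ = ENNReal.ofReal (K * ((1/c) ^ r * Real.Gamma r)) := (lint_aux hr hc hK).symm
    _ = 1 := by
        have h1c : (1:ℝ)/c = (1-p)/p := by rw [hcp, one_div, inv_div]
        have h1 : p ^ r * ((1-p)/p) ^ r = (1-p) ^ r := by
          rw [← Real.mul_rpow hp.le (by positivity)]
          congr 1
          field_simp
        have h2 : (1-p) ^ (-r) * (1-p) ^ r = 1 := by rw [← Real.rpow_add h1p]; simp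
        have key : K * ((1/c) ^ r * Real.Gamma r) = 1 := by
          rw [hKdef, h1c]
          field_simp
          linear_combination ((1-p) ^ (-r)) * h1 + h2
        rw [key, ENNReal.ofReal_one]

open scoped ENNReal

lemma tsum_pi_prod : ∀ (n : ℕ) (β : Fin n → Type) (g : ∀ i, β i → ℝ≥0∞),
    ∑' q : (∀ i, β i), ∏ i, g i (q i) = ∏ i, ∑' b : β i, g i b := by
  intro n
  induction n with
  | zero =>
      intro β g
      rw [tsum_eq_single (fun i => i.elim0) (fun q hq => by
        exact absurd (funext (fun i => i.elim0)) (Ne.symm hq))]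
      simp
  | succ n ih =>
      intro β g
      rw [← (Fin.consEquiv β).tsum_eq]
      have : ∀ q : β 0 × (∀ i : Fin n, β i.succ),
          ∏ i, g i ((Fin.consEquiv β) q i)
            = g 0 q.1 * ∏ i : Fin n, g i.succ (q.2 i) := by
        intro q
        rw [Fin.prod_univ_succ]
        simp [Fin.consEquiv]
      rw [tsum_congr this,
        ENNReal.tsum_prod' (f := fun q : β 0 × (∀ i : Fin n, β i.succ) =>
          g 0 q.1 * ∏ i : Fin n, g i.succ (q.2 i)), Fin.prod_univ_succ]
      have h2 : ∀ b : β 0,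
          (∑' f : (∀ i : Fin n, β i.succ), ∏ i : Fin n, g i.succ (((b, f) : β 0 × _).2 i))
            = ∏ i : Fin n, ∑' c : β i.succ, g i.succ c := by
        intro b
        exact ih (fun i => β i.succ) (fun i => g i.succ)
      rw [tsum_congr (fun b : β 0 => ENNReal.tsum_mul_left (a := g 0 b))]
      rw [tsum_congr (fun b : β 0 => by rw [h2 b])]
      rw [ENNReal.tsum_mul_right]

lemma tsum_antidiag (W U : ℕ → ℝ≥0∞) (m : ℕ) :
    ∑' q : {ab : ℕ × ℕ // ab.1 + ab.2 = m}, W q.1.1 * U q.1.2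
      = ∑ j ∈ Finset.range (m+1), W j * U (m - j) := by
  let e : Fin (m+1) ≃ {ab : ℕ × ℕ // ab.1 + ab.2 = m} :=
    { toFun := fun j => ⟨(j.1, m - j.1), by omega⟩
      invFun := fun q => ⟨q.1.1, by have := q.2; omega⟩
      left_inv := fun j => by ext; rfl
      right_inv := fun q => by
        apply Subtype.ext
        have := q.2
        apply Prod.ext <;> simp <;> omega }
  rw [← e.tsum_eq, tsum_fintype]
  exact Fin.sum_univ_eq_sum_range (fun j => W j * U (m - j)) (m+1)

lemma conv_pi (n : ℕ) (W U C : ℕ → ℝ≥0∞)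
    (hC : ∀ m, C m = ∑ j ∈ Finset.range (m+1), W j * U (m - j))
    (f : (Fin n → ℕ) → ℝ≥0∞) :
    ∑' zw : (Fin n → ℕ) × (Fin n → ℕ),
      ((∏ i, W (zw.1 i)) * (∏ i, U (zw.2 i)) * f (fun i => zw.1 i + zw.2 i))
      = ∑' m : Fin n → ℕ, (∏ i, C (m i)) * f m := by
  classical
  set ψ : (Fin n → ℕ × ℕ) → (Fin n → ℕ) := fun q => fun i => (q i).1 + (q i).2 with hψ
  have hL : ∑' zw : (Fin n → ℕ) × (Fin n → ℕ),
      ((∏ i, W (zw.1 i)) * (∏ i, U (zw.2 i)) * f (fun i => zw.1 i + zw.2 i))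
      = ∑' q : Fin n → ℕ × ℕ, ((∏ i, W ((q i).1)) * (∏ i, U ((q i).2)) * f (ψ q)) :=
    ((Equiv.arrowProdEquivProdArrow (Fin n) (fun _ => ℕ) (fun _ => ℕ)).tsum_eq _).symm
  rw [hL, ← (Equiv.sigmaFiberEquiv ψ).tsum_eq, ENNReal.tsum_sigma']
  refine tsum_congr fun m => ?_
  have h1 : ∀ q : {q : Fin n → ℕ × ℕ // ψ q = m},
      (∏ i, W ((q.1 i).1)) * (∏ i, U ((q.1 i).2)) * f (ψ q.1)
        = (∏ i, (W ((q.1 i).1) * U ((q.1 i).2))) * f m := by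
    intro q; rw [q.2, Finset.prod_mul_distrib]
  refine Eq.trans (tsum_congr h1) ?_
  rw [ENNReal.tsum_mul_right]
  congr 1
  let e3 : {q : Fin n → ℕ × ℕ // ψ q = m} ≃ (∀ i, {ab : ℕ × ℕ // ab.1 + ab.2 = m i}) :=
    (Equiv.subtypeEquivRight (fun q => by simp [hψ, funext_iff])).trans Equiv.subtypePiEquivPi
  rw [← e3.symm.tsum_eq]
  have h4 : ∀ h : (∀ i, {ab : ℕ × ℕ // ab.1 + ab.2 = m i}),
      (∏ i, (W (((e3.symm h) : {q : Fin n → ℕ × ℕ // ψ q = m}).1 i).1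
        * U (((e3.symm h) : {q : Fin n → ℕ × ℕ // ψ q = m}).1 i).2))
        = ∏ i, (W ((h i).1.1) * U ((h i).1.2)) := fun h => rfl
  rw [tsum_congr h4]
  rw [tsum_pi_prod n (fun i => {ab : ℕ × ℕ // ab.1 + ab.2 = m i})
    (fun i ab => W ab.1.1 * U ab.1.2)]
  exact Finset.prod_congr rfl fun i _ => (tsum_antidiag W U (m i)).trans (hC (m i)).symm

/-- The joint value function is non-decreasing in `x` (componentwise) and in `k`. -/
theorem joint_value_monotone
    (α0 β0 : ℝ) (hα0 : 0 < α0) (hβ0 : 0 < β0)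
    (N T : ℕ) (hN : 1 ≤ N) (hT : 1 ≤ T)
    (ξ : Fin N → ℕ) (hξ : ∀ i, 1 ≤ ξ i)
    (cp cu : Fin N → ℝ) (hcp : ∀ i, 0 < cp i) (hcpcu : ∀ i, cp i < cu i)
    (V : ℕ → (Fin N → ℕ) → ℕ → ℝ)
    (hVT : ∀ x k, V T x k = ∑ i, if ξ i ≤ x i then cu i else 0)
    (hV : ∀ t, t < T → ∀ x k,
      V t x k = ⨅ a : {a : Fin N → Bool // ∀ i, ξ i ≤ x i → a i = true},
        ((∑ i, ((if a.1 i = true ∧ x i < ξ i then cp i else 0)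
              + (if ξ i ≤ x i then cu i else 0)))
         + ∑' z : Fin N → ℕ,
             (∏ i, NB (α0 + (k : ℝ)) (pt β0 N t) (z i)) *
               V (t + 1) (fun i => (if a.1 i then 0 else x i) + z i) (k + ∑ i, z i))) :
    ∀ t ≤ T,
      (∀ (x x' : Fin N → ℕ), (∀ i, x i ≤ x' i) → ∀ k : ℕ, V t x k ≤ V t x' k) ∧
      (∀ (x : Fin N → ℕ) (k k' : ℕ), k ≤ k' → V t x k ≤ V t x k') := by
  classical
  -- basic facts about p_t
  have hp0 : ∀ t : ℕ, 0 < pt β0 N t := by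
    intro t
    have h1 : (0:ℝ) < β0 + (N:ℝ) * (t:ℝ) := by positivity
    exact div_pos h1 (by linarith)
  have hp1 : ∀ t : ℕ, pt β0 N t < 1 := by
    intro t
    have h1 : (0:ℝ) < β0 + (N:ℝ) * (t:ℝ) := by positivity
    rw [pt, div_lt_one (by linarith)]
    linarith
  -- weights
  have wnonneg : ∀ (r : ℝ), 0 ≤ r → ∀ (t : ℕ) (z : Fin N → ℕ),
      0 ≤ ∏ i, NB r (pt β0 N t) (z i) :=
    fun r hr t z => Finset.prod_nonneg fun i _ => NB_nonneg hr (hp0 t) (hp1 t) _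
  have masspiE : ∀ (r : ℝ), 0 < r → ∀ t : ℕ,
      ∑' z : Fin N → ℕ, ENNReal.ofReal (∏ i, NB r (pt β0 N t) (z i)) = 1 := by
    intro r hr t
    have h1 : ∀ z : Fin N → ℕ, ENNReal.ofReal (∏ i, NB r (pt β0 N t) (z i))
        = ∏ i, ENNReal.ofReal (NB r (pt β0 N t) (z i)) :=
      fun z => ENNReal.ofReal_prod_of_nonneg (fun i _ => NB_nonneg hr.le (hp0 t) (hp1 t) _)
    rw [tsum_congr h1,
      tsum_pi_prod N (fun _ => ℕ) (fun _ z => ENNReal.ofReal (NB r (pt β0 N t) z))]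
    simp [NB_mass hr (hp0 t) (hp1 t)]
  have wsummable : ∀ (r : ℝ), 0 < r → ∀ t : ℕ,
      Summable (fun z : Fin N → ℕ => ∏ i, NB r (pt β0 N t) (z i)) := by
    intro r hr t
    have h := ENNReal.summable_toReal (by
      rw [masspiE r hr t]; exact ENNReal.one_ne_top)
    exact h.congr fun z => ENNReal.toReal_ofReal (wnonneg r hr.le t z)
  have wtsum : ∀ (r : ℝ), 0 < r → ∀ t : ℕ,
      ∑' z : Fin N → ℕ, (∏ i, NB r (pt β0 N t) (z i)) = 1 := by
    intro r hr t
    have h2 := ENNReal.tsum_toReal_eq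
      (f := fun z : Fin N → ℕ => ENNReal.ofReal (∏ i, NB r (pt β0 N t) (z i)))
      (fun z => ENNReal.ofReal_ne_top)
    rw [masspiE r hr t] at h2
    simp only [ENNReal.toReal_one] at h2
    rw [← tsum_congr (fun z : Fin N → ℕ =>
      ENNReal.toReal_ofReal (wnonneg r hr.le t z)), ← h2]
  have hsummul : ∀ (r : ℝ), 0 < r → ∀ (t : ℕ) (f : (Fin N → ℕ) → ℝ) (C : ℝ),
      (∀ z, 0 ≤ f z) → (∀ z, f z ≤ C) →
      Summable (fun z : Fin N → ℕ => (∏ i, NB r (pt β0 N t) (z i)) * f z) := by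
    intro r hr t f C hf0 hfC
    refine Summable.of_nonneg_of_le
      (fun z => mul_nonneg (wnonneg r hr.le t z) (hf0 z))
      (fun z => mul_le_mul_of_nonneg_left (hfC z) (wnonneg r hr.le t z))
      ((wsummable r hr t).mul_right C)
  have htsum_le : ∀ (r : ℝ), 0 < r → ∀ (t : ℕ) (f : (Fin N → ℕ) → ℝ) (C : ℝ),
      (∀ z, 0 ≤ f z) → (∀ z, f z ≤ C) →
      ∑' z : Fin N → ℕ, (∏ i, NB r (pt β0 N t) (z i)) * f z ≤ C := by
    intro r hr t f C hf0 hfC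
    have h1 : ∑' z : Fin N → ℕ, (∏ i, NB r (pt β0 N t) (z i)) * f z
        ≤ ∑' z : Fin N → ℕ, (∏ i, NB r (pt β0 N t) (z i)) * C :=
      Summable.tsum_le_tsum (fun z => mul_le_mul_of_nonneg_left (hfC z) (wnonneg r hr.le t z))
        (hsummul r hr t f C hf0 hfC) ((wsummable r hr t).mul_right C)
    rwa [tsum_mul_right, wtsum r hr t, one_mul] at h1
  -- cost bounds
  set Cb : ℝ := ∑ i, (cp i + cu i) with hCbdef
  have hCb0 : 0 ≤ Cb := Finset.sum_nonneg fun i _ => by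
    have h1 := hcp i; have h2 := hcpcu i; linarith
  have hcost0 : ∀ (a : Fin N → Bool) (x : Fin N → ℕ),
      0 ≤ ∑ i, ((if a i = true ∧ x i < ξ i then cp i else 0)
        + (if ξ i ≤ x i then cu i else 0)) := by
    intro a x
    refine Finset.sum_nonneg fun i _ => add_nonneg ?_ ?_ <;>
      · split_ifs
        · have h1 := hcp i; have h2 := hcpcu i; linarith
        · exact le_refl 0
  have hcostC : ∀ (a : Fin N → Bool) (x : Fin N → ℕ),
      (∑ i, ((if a i = true ∧ x i < ξ i then cp i else 0)
        + (if ξ i ≤ x i then cu i else 0))) ≤ Cb := by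
    intro a x
    refine Finset.sum_le_sum fun i _ => ?_
    have h1 := hcp i; have h2 := hcpcu i
    refine add_le_add ?_ ?_ <;> · split_ifs <;> linarith
  have hne : ∀ x : Fin N → ℕ,
      Nonempty {a : Fin N → Bool // ∀ i, ξ i ≤ x i → a i = true} :=
    fun x => ⟨⟨fun _ => true, fun _ _ => rfl⟩⟩
  have hVT_bounds : ∀ x k, 0 ≤ V T x k ∧ V T x k ≤ Cb := by
    intro x k
    rw [hVT]
    constructor
    · refine Finset.sum_nonneg fun i _ => ?_
      split_ifs
      · have h1 := hcp i; have h2 := hcpcu i; linarith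
      · exact le_refl 0
    · refine Finset.sum_le_sum fun i _ => ?_
      have h1 := hcp i; have h2 := hcpcu i
      split_ifs <;> linarith
  have hbound : ∀ (j t : ℕ), t + j = T → ∀ x k,
      0 ≤ V t x k ∧ V t x k ≤ Cb * ((j:ℝ) + 1) := by
    intro j
    induction j with
    | zero =>
        intro t htT x k
        have : t = T := by omega
        subst this
        refine ⟨(hVT_bounds x k).1, le_trans (hVT_bounds x k).2 ?_⟩
        norm_num
    | succ j ih =>
        intro t htT x k
        have ht : t < T := by omega
        have hIH : ∀ x k, 0 ≤ V (t+1) x k ∧ V (t+1) x k ≤ Cb * ((j:ℝ) + 1) :=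
          fun x k => ih (t+1) (by omega) x k
        rw [hV t ht x k]
        haveI := hne x
        have hr : (0:ℝ) < α0 + (k:ℝ) := by positivity
        constructor
        · refine le_ciInf fun a => add_nonneg (hcost0 _ _)
            (tsum_nonneg fun z => mul_nonneg (wnonneg _ hr.le t z) (hIH _ _).1)
        · refine le_trans (ciInf_le (Set.Finite.bddBelow (Set.finite_range _))
            ⟨fun _ => true, fun _ _ => rfl⟩) ?_
          have h2 : ∑' z : Fin N → ℕ,
              (∏ i, NB (α0 + (k:ℝ)) (pt β0 N t) (z i)) *
                V (t + 1) (fun i => (if true then 0 else x i) + z i) (k + ∑ i, z i)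
              ≤ Cb * ((j:ℝ) + 1) :=
            htsum_le _ hr t _ _ (fun z => (hIH _ _).1) (fun z => (hIH _ _).2)
          have h3 := hcostC (fun _ => true) x
          push_cast
          linarith
  have masspiP : ∀ (r : ℝ), 0 < r → ∀ t : ℕ,
      ∑' w : Fin N → ℕ, (∏ i, ENNReal.ofReal (NB r (pt β0 N t) (w i))) = 1 := by
    intro r hr t
    rw [← masspiE r hr t]
    exact tsum_congr fun z =>
      (ENNReal.ofReal_prod_of_nonneg (fun i _ => NB_nonneg hr.le (hp0 t) (hp1 t) _)).symm
  have hOFrep : ∀ (r : ℝ), 0 < r → ∀ (t : ℕ) (f : (Fin N → ℕ) → ℝ) (C : ℝ),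
      (∀ z, 0 ≤ f z) → (∀ z, f z ≤ C) →
      ENNReal.ofReal (∑' z : Fin N → ℕ, (∏ i, NB r (pt β0 N t) (z i)) * f z)
        = ∑' z : Fin N → ℕ,
            (∏ i, ENNReal.ofReal (NB r (pt β0 N t) (z i))) * ENNReal.ofReal (f z) := by
    intro r hr t f C hf0 hfC
    rw [ENNReal.ofReal_tsum_of_nonneg (fun z => mul_nonneg (wnonneg r hr.le t z) (hf0 z))
      (hsummul r hr t f C hf0 hfC)]
    refine tsum_congr fun z => ?_
    rw [ENNReal.ofReal_mul (wnonneg r hr.le t z),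
      ENNReal.ofReal_prod_of_nonneg (fun i _ => NB_nonneg hr.le (hp0 t) (hp1 t) _)]
  have main : ∀ (j t : ℕ), t + j = T →
      (∀ (x x' : Fin N → ℕ), (∀ i, x i ≤ x' i) → ∀ k : ℕ, V t x k ≤ V t x' k) ∧
      (∀ (x : Fin N → ℕ) (k k' : ℕ), k ≤ k' → V t x k ≤ V t x k') := by
    intro j
    induction j with
    | zero =>
        intro t htT
        have : t = T := by omega
        subst this
        constructor
        · intro x x' hxx' k
          rw [hVT, hVT]
          refine Finset.sum_le_sum fun i _ => ?_
          have h1 := hcp i; have h2 := hcpcu i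
          by_cases h : ξ i ≤ x i
          · rw [if_pos h, if_pos (h.trans (hxx' i))]
          · rw [if_neg h]; split_ifs <;> linarith
        · intro x k k' _
          rw [hVT, hVT]
    | succ j ihj =>
        intro t htT
        have ht : t < T := by omega
        have IH := ihj (t+1) (by omega)
        have hBt1 : ∀ x k, 0 ≤ V (t+1) x k ∧ V (t+1) x k ≤ Cb * ((j:ℝ) + 1) :=
          fun x k => hbound j (t+1) (by omega) x k
        constructor
        · -- monotone in x
          intro x x' hxx' k
          rw [hV t ht x k, hV t ht x' k]
          haveI := hne x'
          refine le_ciInf fun a' => ?_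
          have hfeas : ∀ i, ξ i ≤ x i → a'.1 i = true := fun i hi => a'.2 i (hi.trans (hxx' i))
          refine le_trans (ciInf_le (Set.Finite.bddBelow (Set.finite_range _)) ⟨a'.1, hfeas⟩) ?_
          have hr : (0:ℝ) < α0 + (k:ℝ) := by positivity
          refine add_le_add ?_ ?_
          · refine Finset.sum_le_sum fun i _ => ?_
            have h1 := hcp i; have h2 := hcpcu i
            by_cases hx1 : ξ i ≤ x i
            · have hx2 : ξ i ≤ x' i := hx1.trans (hxx' i)
              rw [if_pos hx1, if_pos hx2,
                if_neg (show ¬(a'.1 i = true ∧ x i < ξ i) from by simp [not_lt.mpr hx1]),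
                if_neg (show ¬(a'.1 i = true ∧ x' i < ξ i) from by simp [not_lt.mpr hx2])]
            · by_cases hx2 : ξ i ≤ x' i
              · rw [if_pos hx2, if_neg hx1,
                  if_neg (show ¬(a'.1 i = true ∧ x' i < ξ i) from by simp [not_lt.mpr hx2])]
                split_ifs <;> linarith
              · rw [if_neg hx1, if_neg hx2]
                have hlt1 : x i < ξ i := not_le.mp hx1
                have hlt2 : x' i < ξ i := not_le.mp hx2
                simp [hlt1, hlt2]
          · refine Summable.tsum_le_tsum (fun z => mul_le_mul_of_nonneg_left ?_ (wnonneg _ hr.le t z))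
              (hsummul _ hr t _ _ (fun z => (hBt1 _ _).1) (fun z => (hBt1 _ _).2))
              (hsummul _ hr t _ _ (fun z => (hBt1 _ _).1) (fun z => (hBt1 _ _).2))
            refine IH.1 _ _ (fun i => ?_) _
            by_cases ha : a'.1 i = true <;> simp [ha, hxx' i]
        · -- monotone in k
          intro x k k' hkk'
          rcases eq_or_lt_of_le hkk' with rfl | hlt
          · exact le_refl _
          rw [hV t ht x k, hV t ht x k']
          haveI := hne x
          refine le_ciInf fun a => ?_
          refine le_trans (ciInf_le (Set.Finite.bddBelow (Set.finite_range _)) a) ?_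
          refine add_le_add (le_refl _) ?_
          have hr : (0:ℝ) < α0 + (k:ℝ) := by positivity
          have hr' : (0:ℝ) < α0 + (k':ℝ) := by positivity
          have hs : (0:ℝ) < ((k' - k : ℕ) : ℝ) := by
            have h0 : 0 < k' - k := Nat.sub_pos_of_lt hlt
            exact_mod_cast h0
          have hrs : α0 + (k' : ℝ) = (α0 + (k:ℝ)) + ((k' - k : ℕ) : ℝ) := by
            rw [Nat.cast_sub hkk']; ring
          set W : ℕ → ℝ≥0∞ := fun n => ENNReal.ofReal (NB (α0 + (k:ℝ)) (pt β0 N t) n) with hW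
          set U : ℕ → ℝ≥0∞ :=
            fun n => ENNReal.ofReal (NB (((k' - k : ℕ) : ℝ)) (pt β0 N t) n) with hU
          set Wt : ℕ → ℝ≥0∞ := fun n => ENNReal.ofReal (NB (α0 + (k':ℝ)) (pt β0 N t) n) with hWt
          have hconv : ∀ m, Wt m = ∑ jj ∈ Finset.range (m+1), W jj * U (m - jj) := by
            intro m
            rw [hWt]
            simp only []
            rw [hrs, ← NB_conv hr hs (hp0 t) m,
              ENNReal.ofReal_sum_of_nonneg (fun jj _ => mul_nonneg
                (NB_nonneg hr.le (hp0 t) (hp1 t) _) (NB_nonneg hs.le (hp0 t) (hp1 t) _))]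
            exact Finset.sum_congr rfl fun jj _ =>
              ENNReal.ofReal_mul (NB_nonneg hr.le (hp0 t) (hp1 t) _)
          have hVm : ∀ zw : (Fin N → ℕ) × (Fin N → ℕ),
              V (t+1) (fun i => (if a.1 i then 0 else x i) + zw.1 i) (k + ∑ i, zw.1 i)
                ≤ V (t+1) (fun i => (if a.1 i then 0 else x i) + (zw.1 i + zw.2 i))
                    (k' + ∑ i, (zw.1 i + zw.2 i)) := by
            intro zw
            refine le_trans (IH.1 (fun i => (if a.1 i then 0 else x i) + zw.1 i)
              (fun i => (if a.1 i then 0 else x i) + (zw.1 i + zw.2 i))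
              (fun i => add_le_add_right (Nat.le_add_right _ _) _) (k + ∑ i, zw.1 i)) ?_
            exact IH.2 _ _ _
              (add_le_add hkk' (Finset.sum_le_sum fun i _ => Nat.le_add_right _ _))
          have hnn' : (0:ℝ) ≤ ∑' z : Fin N → ℕ,
              (∏ i, NB (α0 + (k':ℝ)) (pt β0 N t) (z i)) *
                V (t + 1) (fun i => (if a.1 i then 0 else x i) + z i) (k' + ∑ i, z i) :=
            tsum_nonneg fun z => mul_nonneg (wnonneg _ hr'.le t z) (hBt1 _ _).1
          rw [← ENNReal.ofReal_le_ofReal_iff hnn']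
          calc ENNReal.ofReal (∑' z : Fin N → ℕ,
                (∏ i, NB (α0 + (k:ℝ)) (pt β0 N t) (z i)) *
                  V (t + 1) (fun i => (if a.1 i then 0 else x i) + z i) (k + ∑ i, z i))
              = ∑' z : Fin N → ℕ, (∏ i, W (z i)) * ENNReal.ofReal
                  (V (t + 1) (fun i => (if a.1 i then 0 else x i) + z i) (k + ∑ i, z i)) :=
                hOFrep _ hr t _ (Cb * ((j:ℝ)+1)) (fun z => (hBt1 _ _).1) (fun z => (hBt1 _ _).2)
            _ = ∑' (z : Fin N → ℕ) (w : Fin N → ℕ),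
                  ((∏ i, W (z i)) * ENNReal.ofReal
                    (V (t + 1) (fun i => (if a.1 i then 0 else x i) + z i) (k + ∑ i, z i)))
                    * (∏ i, U (w i)) := by
                refine tsum_congr fun z => ?_
                rw [ENNReal.tsum_mul_left, masspiP _ hs t, mul_one]
            _ = ∑' zw : (Fin N → ℕ) × (Fin N → ℕ),
                  ((∏ i, W (zw.1 i)) * ENNReal.ofReal
                    (V (t + 1) (fun i => (if a.1 i then 0 else x i) + zw.1 i) (k + ∑ i, zw.1 i)))
                    * (∏ i, U (zw.2 i)) := by
                exact (ENNReal.tsum_prod' (f := fun zw : (Fin N → ℕ) × (Fin N → ℕ) =>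
                  ((∏ i, W (zw.1 i)) * ENNReal.ofReal
                    (V (t + 1) (fun i => (if a.1 i then 0 else x i) + zw.1 i) (k + ∑ i, zw.1 i)))
                    * (∏ i, U (zw.2 i)))).symm
            _ ≤ ∑' zw : (Fin N → ℕ) × (Fin N → ℕ),
                  ((∏ i, W (zw.1 i)) * (∏ i, U (zw.2 i))) * ENNReal.ofReal
                    (V (t + 1) (fun i => (if a.1 i then 0 else x i) + (zw.1 i + zw.2 i))
                      (k' + ∑ i, (zw.1 i + zw.2 i))) := by
                refine ENNReal.tsum_le_tsum fun zw => ?_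
                rw [mul_right_comm]
                exact mul_le_mul_right (ENNReal.ofReal_le_ofReal (hVm zw)) _
            _ = ∑' m : Fin N → ℕ, (∏ i, Wt (m i)) * ENNReal.ofReal
                  (V (t + 1) (fun i => (if a.1 i then 0 else x i) + m i) (k' + ∑ i, m i)) := by
                exact conv_pi N W U Wt hconv (fun m => ENNReal.ofReal
                  (V (t + 1) (fun i => (if a.1 i then 0 else x i) + m i) (k' + ∑ i, m i)))
            _ = ENNReal.ofReal (∑' z : Fin N → ℕ,
                (∏ i, NB (α0 + (k':ℝ)) (pt β0 N t) (z i)) *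
                  V (t + 1) (fun i => (if a.1 i then 0 else x i) + z i) (k' + ∑ i, z i)) :=
                (hOFrep _ hr' t _ (Cb * ((j:ℝ)+1))
                  (fun z => (hBt1 _ _).1) (fun z => (hBt1 _ _).2)).symm
  intro t htT
  exact main (T - t) t (by omega)
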